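/- Let A₁,…,A_m be d×d real matrices sharing a common proper invariant cone K, and suppose the family is irreducible (no common nontrivial invariant subspace). If v ∈ ∂K is a nonzero eigenvector of the mean matrix Ā = (1/m)∑A_i, and Γ is the minimal face of K containing v, then A_i Γ ⊆ Γ for every i. -/

import Mathlib

open Matrix Set

def IsProperCone {d : ℕ} (K : Set (Fin d → ℝ)) : Prop :=
  IsClosed K ∧ Convex ℝ K ∧ (∀ x ∈ K, ∀ t : ℝ, 0 ≤ t → t • x ∈ K) ∧
    K ∩ (-K) = {0} ∧ (interior K).Nonempty

/-- `K` is a proper cone invariant for every matrix in the family. -/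
def IsInvariantCone {d m : ℕ} (𝒜 : Fin m → Matrix (Fin d) (Fin d) ℝ)
    (K : Set (Fin d → ℝ)) : Prop :=
  IsProperCone K ∧ ∀ i, ∀ x ∈ K, (𝒜 i).mulVec x ∈ K

/-- The family has no common nontrivial invariant subspace. -/
def IsIrreducibleFamily {d m : ℕ} (𝒜 : Fin m → Matrix (Fin d) (Fin d) ℝ) : Prop :=
  ∀ V : Submodule ℝ (Fin d → ℝ), (∀ i, ∀ x ∈ V, (𝒜 i).mulVec x ∈ V) → V = ⊥ ∨ V = ⊤

/-- A face of the cone `K`: a subcone `Γ` such that `x + y ∈ Γ` with `x, y ∈ K`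
implies `x, y ∈ Γ`. -/
def IsFace {d : ℕ} (K Γ : Set (Fin d → ℝ)) : Prop :=
  Γ ⊆ K ∧ (∀ x ∈ Γ, ∀ t : ℝ, 0 ≤ t → t • x ∈ Γ) ∧ (∀ x ∈ Γ, ∀ y ∈ Γ, x + y ∈ Γ) ∧
    ∀ x ∈ K, ∀ y ∈ K, x + y ∈ Γ → x ∈ Γ ∧ y ∈ Γ

lemma sum_mulVec_aux {d m : ℕ} (A : Fin m → Matrix (Fin d) (Fin d) ℝ)
    (s : Finset (Fin m)) (v : Fin d → ℝ) :
    (∑ i ∈ s, A i).mulVec v = ∑ i ∈ s, (A i).mulVec v := by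
  classical
  induction s using Finset.induction with
  | empty => simp
  | insert _ _ hx ih => rw [Finset.sum_insert hx, Finset.sum_insert hx, Matrix.add_mulVec, ih]

theorem minimal_face_invariant {d m : ℕ} (hm : 0 < m)
    (𝒜 : Fin m → Matrix (Fin d) (Fin d) ℝ)
    (hirr : IsIrreducibleFamily 𝒜) (K : Set (Fin d → ℝ))
    (hK : IsInvariantCone 𝒜 K)
    (v : Fin d → ℝ) (hv : v ∈ frontier K) (hv0 : v ≠ 0) (lam : ℝ)
    (heig : ((m : ℝ)⁻¹ • ∑ i, 𝒜 i).mulVec v = lam • v)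
    (Γ : Set (Fin d → ℝ)) (hΓ : IsFace K Γ) (hvΓ : v ∈ Γ)
    (hmin : ∀ Γ' : Set (Fin d → ℝ), IsFace K Γ' → v ∈ Γ' → Γ ⊆ Γ') :
    ∀ i, ∀ x ∈ Γ, (𝒜 i).mulVec x ∈ Γ := by

  obtain ⟨⟨hcl, hconv, hcone, hpoint, hint⟩, hinv⟩ := hK
  have hvK : v ∈ K := hcl.frontier_subset hv
  have haddK : ∀ x ∈ K, ∀ y ∈ K, x + y ∈ K := by
    intro x hx y hy
    have h2 : (1/2 : ℝ) • x + (1/2 : ℝ) • y ∈ K :=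
      hconv hx hy (by norm_num) (by norm_num) (by norm_num)
    have := hcone _ h2 2 (by norm_num)
    simpa [smul_add, smul_smul] using this
  have h0K : (0 : Fin d → ℝ) ∈ K := by simpa using hcone v hvK 0 le_rfl
  have hsum : ∑ j, (𝒜 j).mulVec v = ((m : ℝ) * lam) • v := by
    have hm0 : (m : ℝ) ≠ 0 := Nat.cast_ne_zero.mpr hm.ne'
    have h := heig
    rw [Matrix.smul_mulVec, sum_mulVec_aux] at h
    have := congrArg (fun w => (m : ℝ) • w) h
    simpa [smul_smul, hm0, mul_comm] using this
  have hsumK : ∀ s : Finset (Fin m), ∑ j ∈ s, (𝒜 j).mulVec v ∈ K := by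
    intro s
    classical
    induction s using Finset.induction with
    | empty => simpa using h0K
    | insert _ _ hx ih =>
        rw [Finset.sum_insert hx]
        exact haddK _ (hinv _ v hvK) _ ih
  have hc : 0 ≤ (m : ℝ) * lam := by
    by_contra h
    push_neg at h
    have hcv : ((m : ℝ) * lam) • v ∈ K := hsum ▸ hsumK Finset.univ
    have hcv' : -(((m : ℝ) * lam) • v) ∈ K := by
      have := hcone v hvK (-((m : ℝ) * lam)) (by linarith)
      simpa [neg_smul] using this
    have : ((m : ℝ) * lam) • v ∈ K ∩ (-K) := ⟨hcv, by simpa [Set.mem_neg] using hcv'⟩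
    rw [hpoint] at this
    have := smul_eq_zero.mp this
    rcases this with h1 | h1
    · exact absurd h1 (by nlinarith)
    · exact hv0 h1
  have hsumΓ : ∑ j, (𝒜 j).mulVec v ∈ Γ := by
    rw [hsum]; exact hΓ.2.1 v hvΓ _ hc
  have hAivΓ : ∀ i, (𝒜 i).mulVec v ∈ Γ := by
    intro i
    classical
    have hrest : ∑ j ∈ Finset.univ.erase i, (𝒜 j).mulVec v ∈ K := hsumK _
    have hsplit : (𝒜 i).mulVec v + ∑ j ∈ Finset.univ.erase i, (𝒜 j).mulVec v
        = ∑ j, (𝒜 j).mulVec v := Finset.add_sum_erase _ (fun j => (𝒜 j).mulVec v) (Finset.mem_univ i)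
    exact (hΓ.2.2.2 _ (hinv i v hvK) _ hrest (hsplit ▸ hsumΓ)).1
  set F : Set (Fin d → ℝ) := {x | x ∈ K ∧ ∃ t : ℝ, 0 ≤ t ∧ t • v - x ∈ K} with hF
  have hFface : IsFace K F := by
    refine ⟨fun x hx => hx.1, ?_, ?_, ?_⟩
    · rintro x ⟨hxK, s, hs, hsv⟩ t ht
      refine ⟨hcone x hxK t ht, t * s, mul_nonneg ht hs, ?_⟩
      have := hcone _ hsv t ht
      simpa [smul_sub, smul_smul] using this
    · rintro x ⟨hxK, s, hs, hsv⟩ y ⟨hyK, t, ht, htv⟩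
      refine ⟨haddK x hxK y hyK, s + t, by linarith, ?_⟩
      have := haddK _ hsv _ htv
      have heq : (s + t) • v - (x + y) = (s • v - x) + (t • v - y) := by
        rw [add_smul]; abel
      rwa [heq]
    · rintro x hxK y hyK ⟨_, t, ht, htv⟩
      have hx' : t • v - x ∈ K := by
        have heq : (t • v - (x + y)) + y = t • v - x := by abel
        rw [← heq]; exact haddK _ htv _ hyK
      have hy' : t • v - y ∈ K := by
        have heq : (t • v - (x + y)) + x = t • v - y := by abel
        rw [← heq]; exact haddK _ htv _ hxK
      exact ⟨⟨hxK, t, ht, hx'⟩, ⟨hyK, t, ht, hy'⟩⟩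
  have hvF : v ∈ F := ⟨hvK, 1, by norm_num, by simpa using h0K⟩
  have hFΓ : F ⊆ Γ := by
    rintro x ⟨hxK, t, ht, htv⟩
    have htvΓ : t • v ∈ Γ := hΓ.2.1 v hvΓ t ht
    have hxy : x + (t • v - x) ∈ Γ := by
      have heq : x + (t • v - x) = t • v := by abel
      rwa [heq]
    exact (hΓ.2.2.2 x hxK _ htv hxy).1
  have hΓF : Γ ⊆ F := hmin F hFface hvF
  intro i x hx
  obtain ⟨hxK, t, ht, htv⟩ := hΓF hx
  obtain ⟨_, s, hs, hsv⟩ := hΓF (hAivΓ i)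
  apply hFΓ
  refine ⟨hinv i x hxK, t * s, mul_nonneg ht hs, ?_⟩
  have h1 : (𝒜 i).mulVec (t • v - x) ∈ K := hinv i _ htv
  have h2 : t • (s • v - (𝒜 i).mulVec v) ∈ K := hcone _ hsv t ht
  have h3 := haddK _ h2 _ h1
  have heq : (t * s) • v - (𝒜 i).mulVec x
      = t • (s • v - (𝒜 i).mulVec v) + (𝒜 i).mulVec (t • v - x) := by
    rw [Matrix.mulVec_sub, Matrix.mulVec_smul, smul_sub, smul_smul]
    abel
  rwa [heq]
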